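/- Let G_0, G_1, G_2, … be a sequence of graphs with G_i = G_{i−1} ∪ w_i (adding an isolated vertex) for odd i ≥ 1 and G_i = G_{i−1} ∨ w_i (adding a vertex adjacent to all existing vertices) for even i ≥ 2. Set a = |det(A(G_0))|, b = |det(W(G_0))| and p = |det(A(Ḡ_1))|, where Ḡ_1 is the complement of G_1. Then for every i ≥ 1, |det(W(G_i))| = a^{⌈i/2⌉} · b · p^{⌊i/2⌋}. -/

import Mathlib

open Matrix

open scoped Classical in
/-- The 0/1 adjacency matrix of a simple graph, over the integers. -/
noncomputable def adjMat {V : Type*} [Fintype V] (G : SimpleGraph V) : Matrix V V ℤ :=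
  Matrix.of fun u v => if G.Adj u v then (1 : ℤ) else 0

/-- The walk matrix of a simple graph on `Fin n`: its `j`-th column is ``A^j e``
where `e` is the all-ones vector. -/
noncomputable def walkMat {n : ℕ} (G : SimpleGraph (Fin n)) : Matrix (Fin n) (Fin n) ℤ :=
  Matrix.of fun i j => ((adjMat G ^ (j : ℕ)) *ᵥ fun _ => (1 : ℤ)) i

/-- `G ∪ w`: adjoin a new vertex (labelled `0`) adjacent to no vertex of `G`;
the original vertex `i` of `G` becomes `i.succ`. -/
def unionVertex {n : ℕ} (G : SimpleGraph (Fin n)) : SimpleGraph (Fin (n + 1)) where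
  Adj u v := ∃ i j : Fin n, u = i.succ ∧ v = j.succ ∧ G.Adj i j
  symm := by
    constructor
    rintro u v ⟨i, j, hu, hv, h⟩
    exact ⟨j, i, hv, hu, h.symm⟩
  loopless := by
    constructor
    rintro u ⟨i, j, rfl, hv, h⟩
    obtain rfl : i = j := Fin.succ_inj.mp hv
    exact G.irrefl h

/-- `G ∨ w`: adjoin a new vertex (labelled `0`) adjacent to every vertex of `G`;
the original vertex `i` of `G` becomes `i.succ`. -/
def joinVertex {n : ℕ} (G : SimpleGraph (Fin n)) : SimpleGraph (Fin (n + 1)) where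
  Adj u v := (u = 0 ∧ v ≠ 0) ∨ (v = 0 ∧ u ≠ 0) ∨
    ∃ i j : Fin n, u = i.succ ∧ v = j.succ ∧ G.Adj i j
  symm := by
    constructor
    rintro u v (⟨h1, h2⟩ | ⟨h1, h2⟩ | ⟨i, j, hu, hv, h⟩)
    · exact Or.inr (Or.inl ⟨h1, h2⟩)
    · exact Or.inl ⟨h1, h2⟩
    · exact Or.inr (Or.inr ⟨j, i, hv, hu, h.symm⟩)
  loopless := by
    constructor
    rintro u (⟨h1, h2⟩ | ⟨h1, h2⟩ | ⟨i, j, rfl, hv, h⟩)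
    · exact h2 h1
    · exact h2 h1
    · obtain rfl : i = j := Fin.succ_inj.mp hv
      exact G.irrefl h

/-- The sequence `G₀, G₁, G₂, …` where `Gᵢ = G_{i-1} ∪ wᵢ` for odd `i` and
`Gᵢ = G_{i-1} ∨ wᵢ` for even `i ≥ 2`. -/
def seqGraph {n0 : ℕ} (G0 : SimpleGraph (Fin n0)) : (i : ℕ) → SimpleGraph (Fin (n0 + i))
  | 0 => G0
  | (i + 1) => if (i + 1) % 2 = 1 then unionVertex (seqGraph G0 i) else joinVertex (seqGraph G0 i)

/-- A graph is determined by its generalized spectrum. -/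
def IsDGS {n : ℕ} (G : SimpleGraph (Fin n)) : Prop :=
  ∀ H : SimpleGraph (Fin n),
    (adjMat H).charpoly = (adjMat G).charpoly →
    (adjMat Hᶜ).charpoly = (adjMat Gᶜ).charpoly →
    Nonempty (H ≃g G)

lemma adjU_zero_left {n : ℕ} (G : SimpleGraph (Fin n)) (v : Fin (n+1)) :
    adjMat (unionVertex G) 0 v = 0 := by
  have h : ¬ (unionVertex G).Adj 0 v := by
    rintro ⟨i, j, h, -, -⟩; exact Fin.succ_ne_zero i h.symm
  simp [adjMat, h]

lemma adjU_zero_right {n : ℕ} (G : SimpleGraph (Fin n)) (v : Fin (n+1)) :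
    adjMat (unionVertex G) v 0 = 0 := by
  have h : ¬ (unionVertex G).Adj v 0 := by
    rintro ⟨i, j, -, h, -⟩; exact Fin.succ_ne_zero j h.symm
  simp [adjMat, h]

lemma adjU_succ_succ {n : ℕ} (G : SimpleGraph (Fin n)) (i j : Fin n) :
    adjMat (unionVertex G) i.succ j.succ = adjMat G i j := by
  simp only [adjMat, Matrix.of_apply]
  congr 1
  simp only [eq_iff_iff]
  constructor
  · rintro ⟨a, b, ha, hb, h⟩
    obtain rfl := Fin.succ_inj.mp ha
    obtain rfl := Fin.succ_inj.mp hb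
    exact h
  · exact fun h => ⟨i, j, rfl, rfl, h⟩

lemma powU_mulVec {n : ℕ} (G : SimpleGraph (Fin n)) (j : ℕ) :
    (adjMat (unionVertex G) ^ j) *ᵥ (fun _ => (1:ℤ)) =
      fun v => Fin.cases (if j = 0 then 1 else 0)
        (fun i => ((adjMat G ^ j) *ᵥ fun _ => (1:ℤ)) i) v := by
  induction j with
  | zero =>
    funext v
    induction v using Fin.cases <;> simp [pow_zero, Matrix.one_mulVec]
  | succ j ih =>
    have key : adjMat (unionVertex G) ^ (j+1) *ᵥ (fun _ => (1:ℤ)) =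
        adjMat (unionVertex G) *ᵥ (adjMat (unionVertex G) ^ j *ᵥ fun _ => 1) := by
      rw [pow_succ', Matrix.mulVec_mulVec]
    have key2 : adjMat G ^ (j+1) *ᵥ (fun _ => (1:ℤ)) =
        adjMat G *ᵥ (adjMat G ^ j *ᵥ fun _ => 1) := by
      rw [pow_succ', Matrix.mulVec_mulVec]
    rw [key, ih]
    funext v
    induction v using Fin.cases with
    | zero =>
      simp [Matrix.mulVec, dotProduct, adjU_zero_left]
    | succ i =>
      rw [show (Fin.cases (motive := fun _ => ℤ) (if j + 1 = 0 then 1 else 0)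
        (fun i => ((adjMat G ^ (j+1)) *ᵥ fun _ => (1:ℤ)) i) i.succ) =
        ((adjMat G ^ (j+1)) *ᵥ fun _ => (1:ℤ)) i from rfl, key2]
      simp [Matrix.mulVec, dotProduct, Fin.sum_univ_succ, adjU_zero_right,
        adjU_succ_succ]

lemma walkU_apply {n : ℕ} (G : SimpleGraph (Fin n)) (i j : Fin (n+1)) :
    walkMat (unionVertex G) i j = Fin.cases (if (j:ℕ) = 0 then 1 else 0)
      (fun k => ((adjMat G ^ (j:ℕ)) *ᵥ fun _ => (1:ℤ)) k) i := by
  simp only [walkMat, Matrix.of_apply, powU_mulVec]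

lemma det_walk_union {n : ℕ} (G : SimpleGraph (Fin n)) :
    (walkMat (unionVertex G)).det = (adjMat G).det * (walkMat G).det := by
  rw [Matrix.det_succ_row_zero]
  rw [Finset.sum_eq_single 0]
  · have h00 : walkMat (unionVertex G) 0 0 = 1 := by
      rw [walkU_apply]; simp
    have hsub : (walkMat (unionVertex G)).submatrix Fin.succ ((0 : Fin (n+1)).succAbove)
        = adjMat G * walkMat G := by
      ext i j
      have : ((0 : Fin (n+1)).succAbove) j = j.succ := by simp [Fin.succAbove]
      rw [Matrix.submatrix_apply, this, walkU_apply]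
      have : (adjMat G ^ ((j.succ : Fin (n+1)) : ℕ)) = adjMat G * adjMat G ^ (j : ℕ) := by
        rw [Fin.val_succ, pow_succ']
      simp only [Fin.cases_succ, this, ← Matrix.mulVec_mulVec]
      simp [Matrix.mul_apply, Matrix.mulVec, walkMat, dotProduct]
    rw [h00, hsub]
    simp [Matrix.det_mul]
  · intro j _ hj
    have : walkMat (unionVertex G) 0 j = 0 := by
      have hv : (j:ℕ) ≠ 0 := fun h => hj (Fin.ext h)
      rw [walkU_apply]
      simp [hv]
    rw [this]; ring
  · simp

lemma compl_unionVertex {n : ℕ} (G : SimpleGraph (Fin n)) :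
    (unionVertex G)ᶜ = joinVertex Gᶜ := by
  ext u v
  induction u using Fin.cases <;> induction v using Fin.cases <;>
    simp [unionVertex, joinVertex, SimpleGraph.compl_adj, Fin.succ_ne_zero,
      (Fin.succ_ne_zero _).symm, Fin.succ_inj, eq_comm]

lemma compl_joinVertex {n : ℕ} (G : SimpleGraph (Fin n)) :
    (joinVertex G)ᶜ = unionVertex Gᶜ := by
  ext u v
  induction u using Fin.cases <;> induction v using Fin.cases <;>
    simp [unionVertex, joinVertex, SimpleGraph.compl_adj, Fin.succ_ne_zero,
      (Fin.succ_ne_zero _).symm, Fin.succ_inj, eq_comm]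

lemma adjJ_zero_succ {n : ℕ} (G : SimpleGraph (Fin n)) (v : Fin n) :
    adjMat (joinVertex G) 0 v.succ = 1 := by
  have h : (joinVertex G).Adj 0 v.succ := Or.inl ⟨rfl, Fin.succ_ne_zero v⟩
  simp [adjMat, h]

lemma adjJ_succ_zero {n : ℕ} (G : SimpleGraph (Fin n)) (u : Fin n) :
    adjMat (joinVertex G) u.succ 0 = 1 := by
  have h : (joinVertex G).Adj u.succ 0 := Or.inr (Or.inl ⟨rfl, Fin.succ_ne_zero u⟩)
  simp [adjMat, h]

lemma adjJ_succ_succ {n : ℕ} (G : SimpleGraph (Fin n)) (u v : Fin n) :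
    adjMat (joinVertex G) u.succ v.succ = adjMat G u v := by
  simp only [adjMat, Matrix.of_apply]
  congr 1
  simp only [eq_iff_iff]
  constructor
  · rintro (⟨h, -⟩ | ⟨h, -⟩ | ⟨a, b, ha, hb, h⟩)
    · exact absurd h (Fin.succ_ne_zero u)
    · exact absurd h (Fin.succ_ne_zero v)
    · obtain rfl := Fin.succ_inj.mp ha
      obtain rfl := Fin.succ_inj.mp hb
      exact h
  · exact fun h => Or.inr (Or.inr ⟨u, v, rfl, rfl, h⟩)

lemma det_adj_join_union {n : ℕ} (H : SimpleGraph (Fin n)) :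
    (adjMat (joinVertex (unionVertex H))).det = -(adjMat H).det := by
  set M := adjMat (joinVertex (unionVertex H)) with hM
  have h10 : ∀ k : Fin (n+1), (1 : Fin (n+2)).succAbove k =
      Fin.cases 0 (fun j => j.succ.succ) k := by
    intro k
    induction k using Fin.cases with
    | zero => simp [Fin.succAbove, Fin.lt_def]
    | succ j => simp [Fin.succAbove, Fin.lt_def]
  rw [Matrix.det_succ_row M 1, Finset.sum_eq_single 0]
  · have hM10 : M 1 0 = 1 := by
      rw [hM, show (1 : Fin (n+2)) = (0 : Fin (n+1)).succ from rfl]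
      exact adjJ_succ_zero _ 0
    have hN00 : M.submatrix (1 : Fin (n+2)).succAbove (0 : Fin (n+2)).succAbove 0 0 = 1 := by
      rw [Matrix.submatrix_apply, h10 0]
      simp only [Fin.cases_zero, Fin.succAbove_zero]
      rw [hM]
      exact adjJ_zero_succ _ 0
    have hP : (M.submatrix (1 : Fin (n+2)).succAbove
        (0 : Fin (n+2)).succAbove).submatrix (0 : Fin (n+1)).succAbove Fin.succ
        = adjMat H := by
      ext i j
      simp only [Matrix.submatrix_apply, Fin.succAbove_zero, h10, Fin.cases_succ]
      rw [hM, adjJ_succ_succ, adjU_succ_succ]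
    have hNdet : (M.submatrix (1 : Fin (n+2)).succAbove
        (0 : Fin (n+2)).succAbove).det = (adjMat H).det := by
      rw [Matrix.det_succ_column_zero, Finset.sum_eq_single 0]
      · rw [hN00, hP]; simp
      · intro b _ hb
        obtain ⟨k, rfl⟩ : ∃ k : Fin n, b = k.succ := by
          rcases Fin.eq_zero_or_eq_succ b with h | h
          · exact absurd h hb
          · exact h
        have : M.submatrix (1 : Fin (n+2)).succAbove (0 : Fin (n+2)).succAbove k.succ 0 = 0 := by
          rw [Matrix.submatrix_apply, h10, Fin.cases_succ, Fin.succAbove_zero, hM,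
            adjJ_succ_succ]
          exact adjU_zero_right _ _
        rw [this]; ring
      · simp
    rw [hM10, hNdet]
    simp
  · intro j _ hj
    obtain ⟨k, rfl⟩ : ∃ k : Fin (n+1), j = k.succ := by
      rcases Fin.eq_zero_or_eq_succ j with h | h
      · exact absurd h hj
      · exact h
    have : M 1 k.succ = 0 := by
      rw [hM, show (1 : Fin (n+2)) = (0 : Fin (n+1)).succ from rfl, adjJ_succ_succ]
      exact adjU_zero_left _ _
    rw [this]; ring
  · simp

noncomputable def coefB {n : ℕ} (B : Matrix (Fin n) (Fin n) ℤ) : ℕ → ℕ → ℤ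
  | 0, k => if k = 0 then 1 else 0
  | (j+1), 0 => (∑ i, (B ^ j *ᵥ fun _ => (1:ℤ)) i) - coefB B j 0
  | (j+1), (k+1) => -(coefB B j (k+1)) - coefB B j k

lemma coefB_eq_zero {n : ℕ} (B : Matrix (Fin n) (Fin n) ℤ) :
    ∀ j k, j < k → coefB B j k = 0 := by
  intro j
  induction j with
  | zero => intro k hk; cases k with
    | zero => omega
    | succ k => simp [coefB]
  | succ j ih =>
    intro k hk
    cases k with
    | zero => omega
    | succ k =>
      simp only [coefB]
      rw [ih k (by omega), ih (k+1) (by omega)]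
      ring

lemma coefB_diag {n : ℕ} (B : Matrix (Fin n) (Fin n) ℤ) (j : ℕ) :
    coefB B j j = (-1)^j := by
  induction j with
  | zero => simp [coefB]
  | succ j ih =>
    simp only [coefB]
    rw [ih, coefB_eq_zero B j (j+1) (by omega)]
    ring

lemma adj_compl_eq {n : ℕ} (H : SimpleGraph (Fin n)) :
    adjMat Hᶜ = Matrix.of (fun _ _ => (1:ℤ)) - 1 - adjMat H := by
  ext u v
  by_cases h : u = v
  · subst h
    simp [adjMat, Matrix.one_apply]
  · by_cases h2 : H.Adj u v <;>
      simp [adjMat, Matrix.one_apply, h, h2]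

lemma adj_compl_mulVec {n : ℕ} (H : SimpleGraph (Fin n)) (w : Fin n → ℤ) :
    adjMat Hᶜ *ᵥ w = (fun _ => (∑ k, w k)) - w - adjMat H *ᵥ w := by
  rw [adj_compl_eq, Matrix.sub_mulVec, Matrix.sub_mulVec, Matrix.one_mulVec]
  congr 1
  congr 1
  funext i
  simp [Matrix.mulVec, dotProduct]

lemma mulVec_sum_comb {n : ℕ} (H : SimpleGraph (Fin n)) (g : ℕ → ℤ) (m : ℕ) :
    (adjMat H *ᵥ fun i => ∑ k ∈ Finset.range m, g k * ((adjMat H ^ k) *ᵥ fun _ => (1:ℤ)) i)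
    = fun i => ∑ k ∈ Finset.range m, g k * ((adjMat H ^ (k+1)) *ᵥ fun _ => (1:ℤ)) i := by
  have h : (fun i => ∑ k ∈ Finset.range m, g k * ((adjMat H ^ k) *ᵥ fun _ => (1:ℤ)) i)
      = ∑ k ∈ Finset.range m, g k • ((adjMat H ^ k) *ᵥ fun _ => (1:ℤ)) := by
    funext i
    rw [Finset.sum_apply]
    simp
  have h' : (fun i => ∑ k ∈ Finset.range m, g k * ((adjMat H ^ (k+1)) *ᵥ fun _ => (1:ℤ)) i)
      = ∑ k ∈ Finset.range m, g k • ((adjMat H ^ (k+1)) *ᵥ fun _ => (1:ℤ)) := by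
    funext i
    rw [Finset.sum_apply]
    simp
  rw [h, h']
  rw [show adjMat H *ᵥ (∑ k ∈ Finset.range m, g k • ((adjMat H ^ k) *ᵥ fun _ => (1:ℤ)))
      = (adjMat H).mulVecLin (∑ k ∈ Finset.range m, g k • ((adjMat H ^ k) *ᵥ fun _ => (1:ℤ)))
    from rfl, map_sum]
  refine Finset.sum_congr rfl fun k _ => ?_
  rw [Matrix.mulVecLin_apply, Matrix.mulVec_smul, Matrix.mulVec_mulVec, ← pow_succ']

lemma powB_mulVec {n : ℕ} (H : SimpleGraph (Fin n)) (j : ℕ) :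
    (adjMat Hᶜ ^ j) *ᵥ (fun _ => (1:ℤ)) =
      fun i => ∑ k ∈ Finset.range (j+1),
        coefB (adjMat Hᶜ) j k * ((adjMat H ^ k) *ᵥ fun _ => (1:ℤ)) i := by
  induction j with
  | zero => funext i; simp [coefB]
  | succ j ih =>
    have key : adjMat Hᶜ ^ (j+1) *ᵥ (fun _ => (1:ℤ)) =
        adjMat Hᶜ *ᵥ (adjMat Hᶜ ^ j *ᵥ fun _ => 1) := by
      rw [pow_succ', Matrix.mulVec_mulVec]
    rw [key, adj_compl_mulVec]
    funext i
    have hA : (adjMat H *ᵥ (adjMat Hᶜ ^ j *ᵥ fun _ => (1:ℤ))) i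
        = ∑ k ∈ Finset.range (j+1),
            coefB (adjMat Hᶜ) j k * ((adjMat H ^ (k+1)) *ᵥ fun _ => (1:ℤ)) i := by
      rw [ih, mulVec_sum_comb]
    have hij : (adjMat Hᶜ ^ j *ᵥ fun _ => (1:ℤ)) i
        = ∑ k ∈ Finset.range (j+1),
            coefB (adjMat Hᶜ) j k * ((adjMat H ^ k) *ᵥ fun _ => (1:ℤ)) i := by
      rw [ih]
    simp only [Pi.sub_apply]
    rw [hA, hij]
    -- now pure scalar sum manipulation
    set c := coefB (adjMat Hᶜ) with hc
    set W : ℕ → ℤ := fun k => ((adjMat H ^ k) *ᵥ fun _ => (1:ℤ)) i with hW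
    set s : ℤ := ∑ k, (adjMat Hᶜ ^ j *ᵥ fun _ => (1:ℤ)) k with hs
    have hW0 : W 0 = 1 := by simp [hW]
    have h1 : ∑ k ∈ Finset.range (j+1+1), c (j+1) k * W k
        = (∑ k ∈ Finset.range (j+1), c (j+1) (k+1) * W (k+1)) + c (j+1) 0 * W 0 :=
      Finset.sum_range_succ' _ _
    have h2 : ∑ k ∈ Finset.range (j+1), c (j+1) (k+1) * W (k+1)
        = -(∑ k ∈ Finset.range (j+1), c j (k+1) * W (k+1))
          - ∑ k ∈ Finset.range (j+1), c j k * W (k+1) := by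
      rw [← Finset.sum_neg_distrib, ← Finset.sum_sub_distrib]
      refine Finset.sum_congr rfl fun k _ => ?_
      show c (j+1) (k+1) * W (k+1) = _
      rw [hc]
      simp only [coefB]
      ring
    have h3 : ∑ k ∈ Finset.range (j+1), c j k * W k
        = c j 0 * W 0 + ∑ k ∈ Finset.range j, c j (k+1) * W (k+1) := by
      rw [Finset.sum_range_succ' _ _]; ring
    have h4 : ∑ k ∈ Finset.range (j+1), c j (k+1) * W (k+1)
        = ∑ k ∈ Finset.range j, c j (k+1) * W (k+1) := by
      have hz : c j (j+1) = 0 := coefB_eq_zero _ _ _ (by omega)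
      rw [Finset.sum_range_succ, hz]
      ring
    have h5 : c (j+1) 0 = s - c j 0 := by
      rw [hc]
      simp only [coefB]
      rfl
    rw [h1, h2, h4, h3, h5, hW0]
    ring

lemma walk_compl_eq {n : ℕ} (H : SimpleGraph (Fin n)) :
    walkMat Hᶜ = walkMat H * Matrix.of (fun k j : Fin n => coefB (adjMat Hᶜ) (j:ℕ) (k:ℕ)) := by
  ext i j
  rw [Matrix.mul_apply]
  rw [show walkMat Hᶜ i j = ((adjMat Hᶜ ^ (j:ℕ)) *ᵥ fun _ => (1:ℤ)) i from rfl, powB_mulVec]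
  set F : ℕ → ℤ := fun k => coefB (adjMat Hᶜ) (j:ℕ) k * ((adjMat H ^ k) *ᵥ fun _ => (1:ℤ)) i
    with hF
  have hR : ∑ k : Fin n, walkMat H i k * Matrix.of
        (fun k j : Fin n => coefB (adjMat Hᶜ) (j:ℕ) (k:ℕ)) k j
      = ∑ k : Fin n, F (k : ℕ) := by
    refine Finset.sum_congr rfl fun k _ => ?_
    exact mul_comm _ _
  rw [hR, Fin.sum_univ_eq_sum_range F n]
  refine Finset.sum_subset (Finset.range_subset_range.mpr (by omega)) fun k _ hk => ?_
  have : (j:ℕ) < k := by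
    simp only [Finset.mem_range, not_lt] at hk
    omega
  show coefB (adjMat Hᶜ) (j:ℕ) k * _ = 0
  rw [coefB_eq_zero _ _ _ this, zero_mul]

lemma natAbs_det_walk_compl {n : ℕ} (H : SimpleGraph (Fin n)) :
    ((walkMat Hᶜ).det).natAbs = ((walkMat H).det).natAbs := by
  rw [walk_compl_eq, Matrix.det_mul, Int.natAbs_mul]
  have hU : (Matrix.of fun k j : Fin n => coefB (adjMat Hᶜ) (j:ℕ) (k:ℕ)).det
      = ∏ j : Fin n, (-1:ℤ)^(j:ℕ) := by
    rw [Matrix.det_of_upperTriangular]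
    · exact Finset.prod_congr rfl fun j _ => coefB_diag _ _
    · intro i j hij
      exact coefB_eq_zero _ _ _ hij
  rw [hU]
  have h1 : (∏ j : Fin n, (-1:ℤ)^(j:ℕ)).natAbs = 1 := by
    rw [Finset.prod_pow_eq_pow_sum, Int.natAbs_pow]
    simp
  rw [h1, mul_one]


lemma natAbs_det_walk_join {n : ℕ} (G : SimpleGraph (Fin n)) :
    ((walkMat (joinVertex G)).det).natAbs
      = ((adjMat Gᶜ).det).natAbs * ((walkMat G).det).natAbs := by
  rw [← natAbs_det_walk_compl (joinVertex G), compl_joinVertex, det_walk_union,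
    Int.natAbs_mul, natAbs_det_walk_compl]

lemma natAbs_det_adj_join_union {n : ℕ} (H : SimpleGraph (Fin n)) :
    ((adjMat (joinVertex (unionVertex H))).det).natAbs = ((adjMat H).det).natAbs := by
  rw [det_adj_join_union, Int.natAbs_neg]

lemma seq_succ_odd {n0 : ℕ} (G0 : SimpleGraph (Fin n0)) (i : ℕ) (h : i % 2 = 0) :
    seqGraph G0 (i+1) = unionVertex (seqGraph G0 i) := by
  rw [seqGraph, if_pos (by omega)]

lemma seq_succ_even {n0 : ℕ} (G0 : SimpleGraph (Fin n0)) (i : ℕ) (h : i % 2 = 1) :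
    seqGraph G0 (i+1) = joinVertex (seqGraph G0 i) := by
  rw [seqGraph, if_neg (by omega)]

lemma inv_a {n0 : ℕ} (G0 : SimpleGraph (Fin n0)) :
    ∀ i, i % 2 = 0 → ((adjMat (seqGraph G0 i)).det).natAbs = ((adjMat G0).det).natAbs := by
  intro i
  induction i using Nat.strong_induction_on with
  | _ i ih =>
    obtain _ | _ | m := i
    · intro _; rfl
    · intro h; omega
    · intro h
      rw [seq_succ_even G0 (m+1) (by omega), seq_succ_odd G0 m (by omega),
        natAbs_det_adj_join_union]
      exact ih m (by omega) (by omega)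

lemma inv_p {n0 : ℕ} (G0 : SimpleGraph (Fin n0)) :
    ∀ i, i % 2 = 1 →
      ((adjMat (seqGraph G0 i)ᶜ).det).natAbs = ((adjMat (seqGraph G0 1)ᶜ).det).natAbs := by
  intro i
  induction i using Nat.strong_induction_on with
  | _ i ih =>
    obtain _ | _ | m := i
    · intro h; omega
    · intro _; rfl
    · intro h
      rw [seq_succ_odd G0 (m+1) (by omega), seq_succ_even G0 m (by omega),
        compl_unionVertex, compl_joinVertex, natAbs_det_adj_join_union]
      exact ih m (by omega) (by omega)


/-- with `a = |det A(G₀)|`, `b = |det W(G₀)|` and `p = |det A(Ḡ₁)|`,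
for every `i ≥ 1` we have `|det W(Gᵢ)| = a^⌈i/2⌉ · b · p^⌊i/2⌋`. -/
theorem natAbs_det_walkMat_seqGraph {n0 : ℕ} (G0 : SimpleGraph (Fin n0))
    (a b p : ℕ)
    (ha : a = ((adjMat G0).det).natAbs)
    (hb : b = ((walkMat G0).det).natAbs)
    (hp : p = ((adjMat (seqGraph G0 1)ᶜ).det).natAbs)
    (i : ℕ) (hi : 1 ≤ i) :
    ((walkMat (seqGraph G0 i)).det).natAbs = a ^ ((i + 1) / 2) * b * p ^ (i / 2) := by
  subst ha hb hp
  induction i, hi using Nat.le_induction with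
  | base =>
    rw [seq_succ_odd G0 0 (by omega), det_walk_union, Int.natAbs_mul]
    norm_num
    rfl
  | succ i hi ih =>
    rcases Nat.even_or_odd i with he | ho
    · have h2 : i % 2 = 0 := Nat.even_iff.mp he
      rw [seq_succ_odd G0 i h2, det_walk_union, Int.natAbs_mul, inv_a G0 i h2, ih]
      have e1 : (i + 1 + 1) / 2 = (i + 1) / 2 + 1 := by omega
      have e2 : (i + 1) / 2 = i / 2 := by omega
      rw [e1, e2, pow_succ]
      ring
    · have h2 : i % 2 = 1 := Nat.odd_iff.mp ho
      rw [seq_succ_even G0 i h2, natAbs_det_walk_join, inv_p G0 i h2, ih]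
      have e1 : (i + 1 + 1) / 2 = (i + 1) / 2 := by omega
      have e2 : (i + 1) / 2 = i / 2 + 1 := by omega
      rw [e1, e2, pow_succ]
      ring
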